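/- Let μ ∈ ℂ and A_μ = {η ∈ ℂ : η² = μ}. A function Y : ℂ∖A_μ → ℂ, complex differentiable to second order on ℂ∖A_μ, satisfies (μ−η²)·Y''(η) − 6η·Y'(η) + ((μ−η²)² − 6)·Y(η) = 0 for all η ∈ ℂ∖A_μ if and only if the function R : ℂ∖A_μ → ℂ defined by R(η) = e^{η²/2}·(μ−η²)²·Y(η) (equivalently, Y(η) = (e^{−η²/2}/(μ−η²)²)·R(η)) satisfies (μ−η²)·R''(η) − 2η·(μ−1−η²)·R'(η) + (μ+1)·(μ−2−η²)·R(η) = 0 for all η ∈ ℂ∖A_μ. -/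

import Mathlib

open Complex

theorem statement5 (μ : ℂ) (Y : ℂ → ℂ)
    (hY1 : ∀ η : ℂ, η ^ 2 ≠ μ → DifferentiableAt ℂ Y η)
    (hY2 : ∀ η : ℂ, η ^ 2 ≠ μ → DifferentiableAt ℂ (deriv Y) η) :
    (∀ η : ℂ, η ^ 2 ≠ μ →
        (μ - η ^ 2) * deriv (deriv Y) η - 6 * η * deriv Y η
          + ((μ - η ^ 2) ^ 2 - 6) * Y η = 0) ↔
    (∀ η : ℂ, η ^ 2 ≠ μ →
        (μ - η ^ 2) *
            deriv (deriv (fun w : ℂ => Complex.exp (w ^ 2 / 2) * (μ - w ^ 2) ^ 2 * Y w)) η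
          - 2 * η * (μ - 1 - η ^ 2) *
            deriv (fun w : ℂ => Complex.exp (w ^ 2 / 2) * (μ - w ^ 2) ^ 2 * Y w) η
          + (μ + 1) * (μ - 2 - η ^ 2) *
            (Complex.exp (η ^ 2 / 2) * (μ - η ^ 2) ^ 2 * Y η) = 0) := by
  set F : ℂ → ℂ := fun w : ℂ =>
    Complex.exp (w ^ 2 / 2) *
      ((w * (μ - w ^ 2) ^ 2 - 4 * w * (μ - w ^ 2)) * Y w + (μ - w ^ 2) ^ 2 * deriv Y w)
    with hFdef
  -- derivative of exp(w^2/2)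
  have hE : ∀ η : ℂ, HasDerivAt (fun w : ℂ => Complex.exp (w ^ 2 / 2))
      (Complex.exp (η ^ 2 / 2) * η) η := by
    intro η
    have h := ((hasDerivAt_pow 2 η).div_const 2).cexp
    refine h.congr_deriv ?_
    push_cast
    ring
  have hM : ∀ η : ℂ, HasDerivAt (fun w : ℂ => μ - w ^ 2) (-(2 * η)) η := by
    intro η
    have h := (hasDerivAt_pow 2 η).const_sub μ
    refine h.congr_deriv ?_
    push_cast
    ring
  have hQ : ∀ η : ℂ, HasDerivAt (fun w : ℂ => (μ - w ^ 2) ^ 2)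
      (2 * (μ - η ^ 2) * (-(2 * η))) η := by
    intro η
    have h := (hM η).pow 2
    refine h.congr_deriv ?_
    push_cast
    ring
  -- first derivative of R
  have hR1 : ∀ η : ℂ, η ^ 2 ≠ μ →
      HasDerivAt (fun w : ℂ => Complex.exp (w ^ 2 / 2) * (μ - w ^ 2) ^ 2 * Y w) (F η) η := by
    intro η hη
    have hYd : HasDerivAt Y (deriv Y η) η := (hY1 η hη).hasDerivAt
    have h := ((hE η).mul (hQ η)).mul hYd
    refine h.congr_deriv ?_
    rw [hFdef]
    simp only [Pi.mul_apply]
    ring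
  have hopen : IsOpen {w : ℂ | w ^ 2 ≠ μ} :=
    isOpen_compl_singleton.preimage (continuous_pow 2)
  have key : ∀ η : ℂ, η ^ 2 ≠ μ →
      (μ - η ^ 2) *
          deriv (deriv (fun w : ℂ => Complex.exp (w ^ 2 / 2) * (μ - w ^ 2) ^ 2 * Y w)) η
        - 2 * η * (μ - 1 - η ^ 2) *
          deriv (fun w : ℂ => Complex.exp (w ^ 2 / 2) * (μ - w ^ 2) ^ 2 * Y w) η
        + (μ + 1) * (μ - 2 - η ^ 2) *
          (Complex.exp (η ^ 2 / 2) * (μ - η ^ 2) ^ 2 * Y η)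
      = Complex.exp (η ^ 2 / 2) * (μ - η ^ 2) ^ 2 *
          ((μ - η ^ 2) * deriv (deriv Y) η - 6 * η * deriv Y η
            + ((μ - η ^ 2) ^ 2 - 6) * Y η) := by
    intro η hη
    have hYd : HasDerivAt Y (deriv Y η) η := (hY1 η hη).hasDerivAt
    have hYdd : HasDerivAt (deriv Y) (deriv (deriv Y) η) η := (hY2 η hη).hasDerivAt
    -- deriv R = F near η
    have heq : deriv (fun w : ℂ => Complex.exp (w ^ 2 / 2) * (μ - w ^ 2) ^ 2 * Y w)
        =ᶠ[nhds η] F := by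
      filter_upwards [hopen.mem_nhds hη] with w hw
      exact (hR1 w hw).deriv
    have hd1 : deriv (fun w : ℂ => Complex.exp (w ^ 2 / 2) * (μ - w ^ 2) ^ 2 * Y w) η
        = F η := (hR1 η hη).deriv
    -- derivative of F at η
    have hid : HasDerivAt (fun w : ℂ => w) 1 η := hasDerivAt_id η
    have hP : HasDerivAt (fun w : ℂ => w * (μ - w ^ 2) ^ 2 - 4 * w * (μ - w ^ 2))
        ((1 * (μ - η ^ 2) ^ 2 + η * (2 * (μ - η ^ 2) * (-(2 * η))))
          - ((4 * 1) * (μ - η ^ 2) + (4 * η) * (-(2 * η)))) η :=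
      (hid.mul (hQ η)).sub ((hid.const_mul 4).mul (hM η))
    have hF : HasDerivAt F
        (Complex.exp (η ^ 2 / 2) * η *
            ((η * (μ - η ^ 2) ^ 2 - 4 * η * (μ - η ^ 2)) * Y η
              + (μ - η ^ 2) ^ 2 * deriv Y η)
          + Complex.exp (η ^ 2 / 2) *
            ((((1 * (μ - η ^ 2) ^ 2 + η * (2 * (μ - η ^ 2) * (-(2 * η))))
                - ((4 * 1) * (μ - η ^ 2) + (4 * η) * (-(2 * η)))) * Y η
              + (η * (μ - η ^ 2) ^ 2 - 4 * η * (μ - η ^ 2)) * deriv Y η)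
            + ((2 * (μ - η ^ 2) * (-(2 * η))) * deriv Y η
              + (μ - η ^ 2) ^ 2 * deriv (deriv Y) η))) η :=
      (hE η).mul ((hP.mul hYd).add ((hQ η).mul hYdd))
    have hd2 : deriv (deriv (fun w : ℂ => Complex.exp (w ^ 2 / 2) * (μ - w ^ 2) ^ 2 * Y w)) η
        = deriv F η := heq.deriv_eq
    rw [hd1, hd2, hF.deriv, hFdef]
    ring
  constructor
  · intro h η hη
    rw [key η hη, h η hη, mul_zero]
  · intro h η hη
    have h2 := h η hη
    rw [key η hη] at h2
    have hg : Complex.exp (η ^ 2 / 2) * (μ - η ^ 2) ^ 2 ≠ 0 :=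
      mul_ne_zero (Complex.exp_ne_zero _) (pow_ne_zero _ (sub_ne_zero.mpr (Ne.symm hη)))
    exact (mul_eq_zero.mp h2).resolve_left hg
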